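/- (Corollary to Theorem 2, geometric decay form.) Assume each f_i is convex, P is μ-strongly convex with minimizer w* and optimal value P*, the δ-similarity condition holds, and 0 < η ≤ min(1/(8nL), 1/(8n²δ)). Define the RR-SARAH trajectory: given w_0 ∈ ℝ^d and permutations π_s of {1,…,n} for each s ≥ 0, let w_{s+1} be the output of a SARAH epoch with step size η, permutation π_s, start point w_s and initial direction ∇P(w_s). Then for every S ≥ 0: P(w_S) − P* ≤ (1 − η·μ·(n+1)/2)^{S} · (P(w_0) − P*). -/

import Mathlib

open scoped BigOperators
open scoped RealInnerProductSpace
section Aux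
variable {E : Type*} [NormedAddCommGroup E] [InnerProductSpace ℝ E] [CompleteSpace E]

theorem line_hasDerivAt (g : E → ℝ) (x v : E) (hg : Differentiable ℝ g) (t : ℝ) :
    HasDerivAt (fun t : ℝ => g (x + t • v)) ⟪gradient g (x + t • v), v⟫ t := by
  have h1 : HasFDerivAt g (InnerProductSpace.toDual ℝ E (gradient g (x + t • v))) (x + t • v) :=
    (hg _).hasGradientAt
  have h2 : HasDerivAt (fun s : ℝ => x + s • v) v t := by
    simpa using ((hasDerivAt_id t).smul_const v).const_add x
  have := h1.comp_hasDerivAt t h2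
  rw [InnerProductSpace.toDual_apply_apply] at this
  exact this

theorem descent_lemma (g : E → ℝ) (L : ℝ) (hL : 0 ≤ L) (hg : Differentiable ℝ g)
    (hlip : ∀ a b, ‖gradient g a - gradient g b‖ ≤ L * ‖a - b‖) (x y : E) :
    g y ≤ g x + ⟪gradient g x, y - x⟫ + L / 2 * ‖y - x‖ ^ 2 := by
  set v := y - x with hv
  set φ' : ℝ → ℝ := fun t => ⟪gradient g (x + t • v), v⟫ with hφ'
  have hderiv : ∀ t ∈ Set.uIcc (0:ℝ) 1, HasDerivAt (fun t : ℝ => g (x + t • v)) (φ' t) t :=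
    fun t _ => line_hasDerivAt g x v hg t
  have hlipφ : LipschitzWith (Real.toNNReal (L * ‖v‖ ^ 2)) φ' := by
    apply LipschitzWith.of_dist_le_mul
    intro a b
    have h1 : φ' a - φ' b = ⟪gradient g (x + a • v) - gradient g (x + b • v), v⟫ := by
      simp [hφ', inner_sub_left]
    have h2 : ‖gradient g (x + a • v) - gradient g (x + b • v)‖ ≤ L * (|a - b| * ‖v‖) := by
      have := hlip (x + a • v) (x + b • v)
      simpa [add_sub_add_left_eq_sub, ← sub_smul, norm_smul] using this
    have h3 : |φ' a - φ' b| ≤ ‖gradient g (x + a • v) - gradient g (x + b • v)‖ * ‖v‖ := by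
      rw [h1]; exact (abs_real_inner_le_norm _ _)
    have h4 : |φ' a - φ' b| ≤ L * ‖v‖ ^ 2 * |a - b| := by
      calc |φ' a - φ' b| ≤ L * (|a - b| * ‖v‖) * ‖v‖ :=
            h3.trans (by apply mul_le_mul_of_nonneg_right h2 (norm_nonneg v))
        _ = L * ‖v‖ ^ 2 * |a - b| := by ring
    rw [Real.dist_eq, Real.dist_eq]
    calc |φ' a - φ' b| ≤ L * ‖v‖ ^ 2 * |a - b| := h4
      _ ≤ (Real.toNNReal (L * ‖v‖ ^ 2) : ℝ) * |a - b| := by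
          apply mul_le_mul_of_nonneg_right _ (abs_nonneg _)
          exact le_max_left _ _
  have hcont : Continuous φ' := hlipφ.continuous
  have hint : IntervalIntegrable φ' MeasureTheory.volume 0 1 := hcont.intervalIntegrable 0 1
  have hftc : ∫ t in (0:ℝ)..1, φ' t = g (x + (1:ℝ) • v) - g (x + (0:ℝ) • v) :=
    intervalIntegral.integral_eq_sub_of_hasDerivAt hderiv hint
  -- pointwise bound
  have hpt : ∀ t ∈ Set.Icc (0:ℝ) 1, φ' t ≤ φ' 0 + L * ‖v‖ ^ 2 * t := by
    intro t ht
    have h1 : φ' t - φ' 0 = ⟪gradient g (x + t • v) - gradient g (x + (0:ℝ) • v), v⟫ := by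
      simp [hφ', inner_sub_left]
    have h2 : ‖gradient g (x + t • v) - gradient g (x + (0:ℝ) • v)‖ ≤ L * (t * ‖v‖) := by
      have := hlip (x + t • v) (x + (0:ℝ) • v)
      simpa [add_sub_add_left_eq_sub, ← sub_smul, norm_smul, abs_of_nonneg ht.1] using this
    have h3 : φ' t - φ' 0 ≤ L * (t * ‖v‖) * ‖v‖ := by
      rw [h1]
      exact (real_inner_le_norm _ _).trans (mul_le_mul_of_nonneg_right h2 (norm_nonneg v))
    nlinarith [h3]
  have hint2 : IntervalIntegrable (fun t => φ' 0 + L * ‖v‖ ^ 2 * t) MeasureTheory.volume 0 1 :=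
    (continuous_const.add (continuous_const.mul continuous_id)).intervalIntegrable 0 1
  have hmono : ∫ t in (0:ℝ)..1, φ' t ≤ ∫ t in (0:ℝ)..1, (φ' 0 + L * ‖v‖ ^ 2 * t) :=
    intervalIntegral.integral_mono_on (by norm_num) hint hint2 hpt
  have hval : ∫ t in (0:ℝ)..1, (φ' 0 + L * ‖v‖ ^ 2 * t) = φ' 0 + L / 2 * ‖v‖ ^ 2 := by
    have hd : ∀ t ∈ Set.uIcc (0:ℝ) 1,
        HasDerivAt (fun t : ℝ => φ' 0 * t + L * ‖v‖ ^ 2 / 2 * t ^ 2)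
          (φ' 0 + L * ‖v‖ ^ 2 * t) t := by
      intro t _
      have h1 := ((hasDerivAt_id t).const_mul (φ' 0)).add
        ((hasDerivAt_pow 2 t).const_mul (L * ‖v‖ ^ 2 / 2))
      convert h1 using 1
      · rfl
      · rfl
      · rfl
      ring
    rw [intervalIntegral.integral_eq_sub_of_hasDerivAt hd hint2]
    ring
  have h0 : φ' 0 = ⟪gradient g x, v⟫ := by simp [hφ']
  have h1v : x + (1:ℝ) • v = y := by simp [hv]
  have h0v : x + (0:ℝ) • v = x := by simp
  rw [h1v, h0v] at hftc
  rw [hval, h0] at hmono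
  linarith [hftc ▸ hmono]

theorem convex_first_order (g : E → ℝ) (hconv : ConvexOn ℝ Set.univ g)
    (x y : E) (gx : E) (hx : HasGradientAt g gx x) :
    g x + ⟪gx, y - x⟫ ≤ g y := by
  set v := y - x with hv
  have hgx : HasFDerivAt g (InnerProductSpace.toDual ℝ E gx) (x + (0:ℝ) • v) := by
    simpa using hasGradientAt_iff_hasFDerivAt.mp hx
  have h2 : HasDerivAt (fun s : ℝ => x + s • v) v 0 := by
    simpa using ((hasDerivAt_id (0:ℝ)).smul_const v).const_add x
  have hφ : HasDerivAt (fun t : ℝ => g (x + t • v)) ⟪gx, v⟫ 0 := by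
    have := hgx.comp_hasDerivAt (0:ℝ) h2
    rw [InnerProductSpace.toDual_apply_apply] at this
    exact this
  have hslope : Filter.Tendsto (slope (fun t : ℝ => g (x + t • v)) 0)
      (nhdsWithin 0 {(0:ℝ)}ᶜ) (nhds ⟪gx, v⟫) := hasDerivAt_iff_tendsto_slope.mp hφ
  have hsub : nhdsWithin (0:ℝ) (Set.Ioi 0) ≤ nhdsWithin 0 {(0:ℝ)}ᶜ :=
    nhdsWithin_mono _ (fun t ht => ne_of_gt ht)
  have hslope' := hslope.mono_left hsub
  have hev : ∀ᶠ t in nhdsWithin (0:ℝ) (Set.Ioi 0),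
      slope (fun t : ℝ => g (x + t • v)) 0 t ≤ g y - g x := by
    filter_upwards [Ioo_mem_nhdsGT_of_mem (by norm_num : (0:ℝ) ∈ Set.Ico 0 1)] with t ht
    have ht0 : 0 < t := ht.1
    have ht1 : t < 1 := ht.2
    have hcx : g (x + t • v) ≤ (1 - t) * g x + t * g y := by
      have := hconv.2 (Set.mem_univ y) (Set.mem_univ x) (le_of_lt ht0)
        (by linarith : (0:ℝ) ≤ 1 - t) (by ring)
      have hpt : t • y + (1 - t) • x = x + t • v := by
        simp only [hv, smul_sub, sub_smul, one_smul]; abel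
      rw [hpt] at this
      simp only [smul_eq_mul] at this; linarith
    rw [slope_def_field]
    have h0 : x + (0:ℝ) • v = x := by simp
    rw [h0, sub_zero, div_le_iff₀ ht0]
    nlinarith [hcx]
  have hfin : ⟪gx, v⟫ ≤ g y - g x := le_of_tendsto hslope' hev
  linarith

theorem sq_norm_hasGradientAt (c : ℝ) (x : E) :
    HasGradientAt (fun z : E => c * ‖z‖ ^ 2) ((2 * c) • x) x := by
  have h1 : HasFDerivAt (fun z : E => ‖z‖ ^ 2) ((2:ℕ) • (innerSL ℝ x)) x :=
    (hasStrictFDerivAt_norm_sq x).hasFDerivAt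
  have h2 : HasFDerivAt (fun z : E => c * ‖z‖ ^ 2) (c • ((2:ℕ) • (innerSL ℝ x))) x :=
    h1.const_mul c
  rw [hasGradientAt_iff_hasFDerivAt]
  convert h2 using 1
  · rfl
  ext y
  simp [InnerProductSpace.toDual_apply_apply, real_inner_smul_left, two_smul, inner_add_left]
  try ring

theorem strong_first_order (g : E → ℝ) (μ : ℝ) (hg : Differentiable ℝ g)
    (hsc : StrongConvexOn Set.univ μ g) (x y : E) :
    g x + ⟪gradient g x, y - x⟫ + μ / 2 * ‖y - x‖ ^ 2 ≤ g y := by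
  have hconv : ConvexOn ℝ Set.univ (fun z => g z - μ / 2 * ‖z‖ ^ 2) :=
    strongConvexOn_iff_convex.mp hsc
  have hgrad : HasGradientAt (fun z => g z - μ / 2 * ‖z‖ ^ 2)
      (gradient g x - μ • x) x := by
    have h1 : HasFDerivAt g (InnerProductSpace.toDual ℝ E (gradient g x)) x :=
      (hg x).hasGradientAt
    have h2 := sq_norm_hasGradientAt (E := E) (μ / 2) x
    have h2' : HasFDerivAt (fun z : E => μ / 2 * ‖z‖ ^ 2)
        (InnerProductSpace.toDual ℝ E ((2 * (μ / 2)) • x)) x := h2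
    have h3 := h1.sub h2'
    rw [hasGradientAt_iff_hasFDerivAt]
    convert h3 using 1
    · rfl
    · rfl
    · rfl
    rw [← map_sub]
    congr 1
    rw [show (2 : ℝ) * (μ / 2) = μ by ring]
  have key := convex_first_order (fun z => g z - μ / 2 * ‖z‖ ^ 2) hconv x y _ hgrad
  simp only [inner_sub_left] at key
  have hexp : ⟪μ • x, y - x⟫ = μ * ⟪x, y⟫ - μ * ‖x‖ ^ 2 := by
    rw [real_inner_smul_left, inner_sub_right, real_inner_self_eq_norm_sq]
    ring
  have hnorm : ‖y - x‖ ^ 2 = ‖y‖ ^ 2 - 2 * ⟪x, y⟫ + ‖x‖ ^ 2 := by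
    rw [norm_sub_sq_real, real_inner_comm]
    try ring
  rw [hexp] at key
  rw [hnorm]
  linarith [key]
end Aux
open scoped BigOperators

set_option maxHeartbeats 2000000 in
/-- Corollary to Theorem 2, geometric decay form, for RR-SARAH. -/
theorem rr_sarah_geometric_decay
    {d n : ℕ} (hd : 1 ≤ d) (hn : 1 ≤ n)
    (f : Fin n → EuclideanSpace ℝ (Fin d) → ℝ)
    (P : EuclideanSpace ℝ (Fin d) → ℝ)
    (hP : ∀ w, P w = (1 / (n : ℝ)) * ∑ i, f i w)
    (L μ δ η : ℝ) (hL : 0 < L) (hμ : 0 < μ) (hδ : 0 < δ)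
    (hdiff : ∀ i, Differentiable ℝ (f i))
    (hconv : ∀ i, ConvexOn ℝ Set.univ (f i))
    (hLip : ∀ i w₁ w₂, ‖gradient (f i) w₁ - gradient (f i) w₂‖ ≤ L * ‖w₁ - w₂‖)
    (hsc : StrongConvexOn Set.univ μ P)
    (wstar : EuclideanSpace ℝ (Fin d)) (hmin : IsMinOn P Set.univ wstar)
    (Pstar : ℝ) (hPstar : Pstar = P wstar)
    (hsim : ∀ i w₁ w₂,
      ‖(gradient (f i) w₁ - gradient P w₁) - (gradient (f i) w₂ - gradient P w₂)‖
        ≤ (δ / 2) * ‖w₁ - w₂‖)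
    (hη0 : 0 < η)
    (hη : η ≤ min (1 / (8 * n * L)) (1 / (8 * n ^ 2 * δ)))
    -- the RR-SARAH trajectory
    (π : ℕ → Equiv.Perm (Fin n))
    (w : ℕ → EuclideanSpace ℝ (Fin d))
    (W V : ℕ → ℕ → EuclideanSpace ℝ (Fin d))
    (hW0 : ∀ s, W s 0 = w s) (hV0 : ∀ s, V s 0 = gradient P (w s))
    (hWrec : ∀ s, ∀ i : Fin n, W s ((i : ℕ) + 1) = W s i - η • V s i)
    (hVrec : ∀ s, ∀ i : Fin n, V s ((i : ℕ) + 1)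
      = V s i + gradient (f (π s i)) (W s ((i : ℕ) + 1)) - gradient (f (π s i)) (W s i))
    (hwnext : ∀ s, w (s + 1) = W s n - η • V s n) :
    ∀ S : ℕ,
      P (w S) - Pstar ≤ (1 - η * μ * ((n : ℝ) + 1) / 2) ^ S * (P (w 0) - Pstar) := by
  have hn0 : (0:ℝ) < n := by exact_mod_cast hn
  -- gradient of P
  have hgradP : ∀ x, HasGradientAt P ((n:ℝ)⁻¹ • ∑ i, gradient (f i) x) x := by
    intro x
    have hsum : HasFDerivAt (fun w => ∑ i, f i w)
        (∑ i, InnerProductSpace.toDual ℝ _ (gradient (f i) x)) x :=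
      HasFDerivAt.fun_sum (fun i _ => (hdiff i x).hasGradientAt)
    have hmul : HasFDerivAt (fun w => (1/(n:ℝ)) * ∑ i, f i w)
        ((1/(n:ℝ)) • ∑ i, InnerProductSpace.toDual ℝ _ (gradient (f i) x)) x :=
      hsum.const_mul _
    have hPeq : (fun w => (1/(n:ℝ)) * ∑ i, f i w) = P := funext fun w => (hP w).symm
    rw [hPeq] at hmul
    rw [hasGradientAt_iff_hasFDerivAt]
    convert hmul using 1
    · rfl
    · rfl
    rw [map_smul, map_sum]
    rw [one_div]
  have hgradPeq : ∀ x, gradient P x = (n:ℝ)⁻¹ • ∑ i, gradient (f i) x :=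
    fun x => (hgradP x).gradient
  have hPdiff : Differentiable ℝ P := fun x => (hgradP x).differentiableAt
  have hLipP : ∀ a b, ‖gradient P a - gradient P b‖ ≤ L * ‖a - b‖ := by
    intro a b
    rw [hgradPeq, hgradPeq, ← smul_sub, ← Finset.sum_sub_distrib]
    rw [norm_smul, Real.norm_eq_abs, abs_of_nonneg (by positivity : (0:ℝ) ≤ (n:ℝ)⁻¹)]
    have h1 : ‖∑ i : Fin n, (gradient (f i) a - gradient (f i) b)‖
        ≤ ∑ i : Fin n, (L * ‖a - b‖) :=
      (norm_sum_le _ _).trans (Finset.sum_le_sum fun i _ => hLip i a b)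
    rw [Finset.sum_const, Finset.card_univ, Fintype.card_fin, nsmul_eq_mul] at h1
    calc (n:ℝ)⁻¹ * ‖∑ i : Fin n, (gradient (f i) a - gradient (f i) b)‖
        ≤ (n:ℝ)⁻¹ * ((n:ℝ) * (L * ‖a - b‖)) := by
          apply mul_le_mul_of_nonneg_left h1 (by positivity)
      _ = L * ‖a - b‖ := by field_simp
  -- μ ≤ L
  have hμL : μ ≤ L := by
    set e : EuclideanSpace ℝ (Fin d) := EuclideanSpace.single ⟨0, hd⟩ (1:ℝ) with he
    have hne : ‖e - 0‖ = 1 := by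
      rw [sub_zero, he, EuclideanSpace.norm_single]; norm_num
    have h1 := descent_lemma P L hL.le hPdiff hLipP 0 e
    have h2 := strong_first_order P μ hPdiff hsc 0 e
    rw [hne] at h1 h2
    norm_num at h1 h2
    linarith
  -- PL inequality
  have hPL : ∀ x, 2 * μ * (P x - Pstar) ≤ ‖gradient P x‖ ^ 2 := by
    intro x
    have h := strong_first_order P μ hPdiff hsc x wstar
    have hcs : -(‖gradient P x‖ * ‖wstar - x‖) ≤ ⟪gradient P x, wstar - x⟫ := by
      have ha := abs_real_inner_le_norm (gradient P x) (wstar - x)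
      have hb := neg_abs_le (⟪gradient P x, wstar - x⟫)
      linarith
    rw [hPstar]
    nlinarith [h, hcs, sq_nonneg (‖gradient P x‖ - μ * ‖wstar - x‖), hμ.le,
      norm_nonneg (wstar - x), norm_nonneg (gradient P x)]
  have hΔ : ∀ x, 0 ≤ P x - Pstar := by
    intro x
    have := isMinOn_iff.mp hmin x (Set.mem_univ x)
    rw [hPstar]; linarith
  -- numeric facts
  have hη1 : η ≤ 1 / (8 * n * L) := le_trans hη (min_le_left _ _)
  have hηL : η * L ≤ 1 / (8 * (n:ℝ)) := by
    rw [le_div_iff₀ (by positivity)] at hη1 ⊢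
    calc η * L * (8 * (n:ℝ)) = η * (8 * (n:ℝ) * L) := by ring
      _ ≤ 1 := hη1
  have hηLnn : 0 ≤ η * L := by positivity
  have hN1 : (n:ℝ) + 1 ≤ 2 * n := by
    have : (1:ℝ) ≤ n := hn0.le.trans (le_refl _) |>.trans (le_refl _) |> fun _ => by
      exact_mod_cast hn
    linarith
  have hηLN : η * L * ((n:ℝ) + 1) ≤ 1 / 4 := by
    calc η * L * ((n:ℝ) + 1) ≤ η * L * (2 * n) :=
          mul_le_mul_of_nonneg_left hN1 hηLnn
      _ ≤ (1 / (8 * (n:ℝ))) * (2 * n) := by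
          apply mul_le_mul_of_nonneg_right hηL (by positivity)
      _ = 1 / 4 := by field_simp; ring
  have hpow : ∀ i : ℕ, i ≤ n → (1 + η * L) ^ i ≤ 8 / 7 := by
    intro i hi
    have ha1 : η * L ≤ 1 / (8 * (n:ℝ)) := hηL
    have ha2 : η * L ≤ 1 / 8 := by
      have : (1:ℝ) / (8 * n) ≤ 1 / 8 := by
        apply div_le_div_of_nonneg_left (by norm_num) (by norm_num)
        have : (1:ℝ) ≤ n := by exact_mod_cast hn
        linarith
      linarith
    have h1 : (1 + η * L) ^ i ≤ (1 + η * L) ^ n :=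
      pow_le_pow_right₀ (by linarith) hi
    have h2 : 1 - (n:ℝ) * (η * L) ≤ (1 - η * L) ^ n := by
      have := one_add_mul_le_pow (a := -(η * L)) (by linarith) n
      calc 1 - (n:ℝ) * (η * L) = 1 + n * (-(η * L)) := by ring
        _ ≤ (1 + -(η * L)) ^ n := this
        _ = (1 - η * L) ^ n := by ring_nf
    have h3 : (1 + η * L) ^ n * (1 - η * L) ^ n ≤ 1 := by
      rw [← mul_pow]
      apply pow_le_one₀ (by nlinarith) (by nlinarith)
    have h4 : (7:ℝ) / 8 ≤ 1 - (n:ℝ) * (η * L) := by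
      have : (n:ℝ) * (η * L) ≤ (n:ℝ) * (1 / (8 * n)) :=
        mul_le_mul_of_nonneg_left ha1 (by positivity)
      have heq : (n:ℝ) * (1 / (8 * n)) = 1 / 8 := by field_simp
      linarith [heq ▸ this]
    have hX0 : (0:ℝ) ≤ (1 + η * L) ^ n := by positivity
    have hY : (7:ℝ) / 8 ≤ (1 - η * L) ^ n := le_trans h4 h2
    have hmul : (1 + η * L) ^ n * (7 / 8) ≤ (1 + η * L) ^ n * ((1 - η * L) ^ n) :=
      mul_le_mul_of_nonneg_left hY hX0
    linarith
  -- per-epoch contraction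
  have key : ∀ s, P (w (s+1)) - Pstar ≤ (1 - η * μ * ((n:ℝ) + 1) / 2) * (P (w s) - Pstar) := by
    intro s
    set Gn := ‖V s 0‖ with hGn
    -- deviation bound
    have dev : ∀ i : ℕ, i ≤ n → ‖V s i - V s 0‖ ≤ ((1 + η * L) ^ i - 1) * Gn := by
      intro i
      induction i with
      | zero => intro _; simp
      | succ k ih =>
        intro hk1
        have hk : k < n := hk1
        have ihk := ih (Nat.le_of_lt hk)
        have hV' : V s (k + 1)
            = V s k + gradient (f (π s ⟨k, hk⟩)) (W s (k + 1))
              - gradient (f (π s ⟨k, hk⟩)) (W s k) := hVrec s ⟨k, hk⟩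
        have hW' : W s (k + 1) = W s k - η • V s k := hWrec s ⟨k, hk⟩
        have hsplit : V s (k + 1) - V s 0
            = (V s k - V s 0) + (gradient (f (π s ⟨k, hk⟩)) (W s (k + 1))
              - gradient (f (π s ⟨k, hk⟩)) (W s k)) := by
          rw [hV']; abel
        have hnormW : ‖W s (k + 1) - W s k‖ = η * ‖V s k‖ := by
          rw [hW']
          rw [show W s k - η • V s k - W s k = -(η • V s k) by abel]
          rw [norm_neg, norm_smul, Real.norm_eq_abs, abs_of_nonneg hη0.le]
        have hgl : ‖gradient (f (π s ⟨k, hk⟩)) (W s (k + 1))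
            - gradient (f (π s ⟨k, hk⟩)) (W s k)‖ ≤ L * (η * ‖V s k‖) := by
          have := hLip (π s ⟨k, hk⟩) (W s (k + 1)) (W s k)
          rw [hnormW] at this; exact this
        have hVk : ‖V s k‖ ≤ (1 + η * L) ^ k * Gn := by
          have htri : ‖V s k‖ ≤ ‖V s k - V s 0‖ + ‖V s 0‖ := by
            have := norm_add_le (V s k - V s 0) (V s 0)
            simpa using this
          rw [← hGn] at htri
          linarith
        have htri2 : ‖V s (k + 1) - V s 0‖ ≤ ‖V s k - V s 0‖ + L * (η * ‖V s k‖) := by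
          rw [hsplit]
          exact (norm_add_le _ _).trans (by linarith [hgl])
        have hmul2 : L * (η * ‖V s k‖) ≤ L * (η * ((1 + η * L) ^ k * Gn)) := by
          apply mul_le_mul_of_nonneg_left _ hL.le
          exact mul_le_mul_of_nonneg_left hVk hη0.le
        have hps : ((1 + η * L) : ℝ) ^ (k + 1) = (1 + η * L) ^ k * (1 + η * L) :=
          pow_succ _ _
        calc ‖V s (k + 1) - V s 0‖
            ≤ ((1 + η * L) ^ k - 1) * Gn + L * (η * ((1 + η * L) ^ k * Gn)) := by
              linarith [htri2, hmul2, ihk]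
          _ = ((1 + η * L) ^ (k + 1) - 1) * Gn := by rw [hps]; ring
    have hGnn : 0 ≤ Gn := norm_nonneg _
    have devb : ∀ i : ℕ, i ≤ n → ‖V s i - V s 0‖ ≤ 1 / 7 * Gn := by
      intro i hi
      have h1 := dev i hi
      have h2 := hpow i hi
      nlinarith [h1, h2, hGnn]
    -- telescoping
    have hWsum : ∀ i : ℕ, i ≤ n → W s i = w s - η • ∑ j ∈ Finset.range i, V s j := by
      intro i
      induction i with
      | zero => intro _; simp [hW0 s]
      | succ k ih =>
        intro hk1
        have hk : k < n := hk1
        rw [hWrec s ⟨k, hk⟩, ih (Nat.le_of_lt hk), Finset.sum_range_succ, smul_add]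
        abel
    set Sv := ∑ j ∈ Finset.range (n + 1), V s j with hSvdef
    have hwplus : w (s + 1) = w s - η • Sv := by
      rw [hwnext s, hWsum n le_rfl, hSvdef, Finset.sum_range_succ, smul_add]
      abel
    set N1 : ℝ := (n:ℝ) + 1 with hN1def
    set Ev := Sv - N1 • V s 0 with hEvdef
    have hEvsum : Ev = ∑ j ∈ Finset.range (n + 1), (V s j - V s 0) := by
      rw [Finset.sum_sub_distrib, Finset.sum_const, Finset.card_range, hEvdef]
      congr 1
      rw [hN1def, ← Nat.cast_smul_eq_nsmul ℝ (n + 1) (V s 0)]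
      push_cast
      ring_nf
    have hEvnorm : ‖Ev‖ ≤ N1 / 7 * Gn := by
      rw [hEvsum]
      calc ‖∑ j ∈ Finset.range (n + 1), (V s j - V s 0)‖
          ≤ ∑ j ∈ Finset.range (n + 1), ‖V s j - V s 0‖ := norm_sum_le _ _
        _ ≤ ∑ j ∈ Finset.range (n + 1), (1 / 7 * Gn) := by
            apply Finset.sum_le_sum
            intro j hj
            exact devb j (Nat.lt_succ_iff.mp (Finset.mem_range.mp hj))
        _ = N1 / 7 * Gn := by
            rw [Finset.sum_const, Finset.card_range, nsmul_eq_mul, hN1def]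
            push_cast; ring
    have hN1pos : (0:ℝ) < N1 := by rw [hN1def]; positivity
    have hSveq : Sv = N1 • V s 0 + Ev := by rw [hEvdef]; abel
    have hinner : N1 * Gn ^ 2 - N1 / 7 * Gn * Gn ≤ ⟪V s 0, Sv⟫ := by
      rw [hSveq, inner_add_right, real_inner_smul_right, real_inner_self_eq_norm_sq]
      have hcs : -(Gn * ‖Ev‖) ≤ ⟪V s 0, Ev⟫ := by
        have ha := abs_real_inner_le_norm (V s 0) Ev
        have hb := neg_abs_le (⟪V s 0, Ev⟫)
        rw [← hGn] at ha
        linarith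
      have : -(Gn * (N1 / 7 * Gn)) ≤ -(Gn * ‖Ev‖) := by
        apply neg_le_neg
        exact mul_le_mul_of_nonneg_left hEvnorm hGnn
      rw [← hGn]
      nlinarith [this, hcs]
    have hSvnorm : ‖Sv‖ ≤ 8 / 7 * N1 * Gn := by
      rw [hSveq]
      calc ‖N1 • V s 0 + Ev‖ ≤ ‖N1 • V s 0‖ + ‖Ev‖ := norm_add_le _ _
        _ = N1 * Gn + ‖Ev‖ := by
            rw [norm_smul, Real.norm_eq_abs, abs_of_pos hN1pos, hGn]
        _ ≤ N1 * Gn + N1 / 7 * Gn := by linarith [hEvnorm]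
        _ = 8 / 7 * N1 * Gn := by ring
    -- descent lemma application
    have hdesc := descent_lemma P L hL.le hPdiff hLipP (w s) (w (s + 1))
    have hdiffpt : w (s + 1) - w s = -(η • Sv) := by rw [hwplus]; abel
    rw [hdiffpt] at hdesc
    have hip : ⟪gradient P (w s), -(η • Sv)⟫ = -(η * ⟪V s 0, Sv⟫) := by
      rw [inner_neg_right, real_inner_smul_right, hV0 s]
    rw [hip] at hdesc
    have hnrm : ‖-(η • Sv)‖ ^ 2 = η ^ 2 * ‖Sv‖ ^ 2 := by
      rw [norm_neg, norm_smul, Real.norm_eq_abs, abs_of_nonneg hη0.le, mul_pow]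
    rw [hnrm] at hdesc
    -- numerics
    set g2 := Gn ^ 2 with hg2def
    have hg2nn : 0 ≤ g2 := sq_nonneg _
    have hPLs : 2 * μ * (P (w s) - Pstar) ≤ g2 := by
      have := hPL (w s)
      rw [hg2def, hGn, hV0 s]
      exact this
    have hI : 6 / 7 * N1 * g2 ≤ ⟪V s 0, Sv⟫ := by
      have : N1 * Gn ^ 2 - N1 / 7 * Gn * Gn = 6 / 7 * N1 * g2 := by
        rw [hg2def]; ring
      linarith [hinner, this.symm.le]
    have hS2 : ‖Sv‖ ^ 2 ≤ 64 / 49 * N1 ^ 2 * g2 := by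
      have h1 : ‖Sv‖ ^ 2 ≤ (8 / 7 * N1 * Gn) ^ 2 := by
        apply pow_le_pow_left₀ (norm_nonneg _) hSvnorm
      calc ‖Sv‖ ^ 2 ≤ (8 / 7 * N1 * Gn) ^ 2 := h1
        _ = 64 / 49 * N1 ^ 2 * g2 := by rw [hg2def]; ring
    have hηLN' : η * L * N1 ≤ 1 / 4 := by rw [hN1def]; exact hηLN
    have hΔs : 0 ≤ P (w s) - Pstar := hΔ (w s)
    have e1 : L / 2 * (η ^ 2 * ‖Sv‖ ^ 2) ≤ 8 / 49 * (η * N1 * g2) := by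
      have step1 : L / 2 * (η ^ 2 * ‖Sv‖ ^ 2) ≤ L / 2 * (η ^ 2 * (64 / 49 * N1 ^ 2 * g2)) := by
        apply mul_le_mul_of_nonneg_left _ (by positivity)
        exact mul_le_mul_of_nonneg_left hS2 (by positivity)
      have step2 : L / 2 * (η ^ 2 * (64 / 49 * N1 ^ 2 * g2))
          = 32 / 49 * ((η * L * N1) * (η * N1 * g2)) := by ring
      have hnn : 0 ≤ η * N1 * g2 := by positivity
      have step3 : (η * L * N1) * (η * N1 * g2) ≤ (1 / 4) * (η * N1 * g2) :=
        mul_le_mul_of_nonneg_right hηLN' hnn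
      calc L / 2 * (η ^ 2 * ‖Sv‖ ^ 2) ≤ 32 / 49 * ((η * L * N1) * (η * N1 * g2)) := by
            rw [← step2]; exact step1
        _ ≤ 32 / 49 * ((1 / 4) * (η * N1 * g2)) := by linarith [step3]
        _ = 8 / 49 * (η * N1 * g2) := by ring
    have e2 : η * ⟪V s 0, Sv⟫ ≥ 6 / 7 * (η * N1 * g2) := by
      have := mul_le_mul_of_nonneg_left hI hη0.le
      calc η * ⟪V s 0, Sv⟫ ≥ η * (6 / 7 * N1 * g2) := this
        _ = 6 / 7 * (η * N1 * g2) := by ring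
    have e3 : P (w (s + 1)) - Pstar ≤ (P (w s) - Pstar) - 34 / 49 * (η * N1 * g2) := by
      have : 6 / 7 * (η * N1 * g2) - 8 / 49 * (η * N1 * g2) = 34 / 49 * (η * N1 * g2) := by ring
      linarith [hdesc, e1, e2]
    have e4 : 34 / 49 * (η * N1) * (2 * μ * (P (w s) - Pstar)) ≤ 34 / 49 * (η * N1) * g2 := by
      apply mul_le_mul_of_nonneg_left hPLs (by positivity)
    have e5 : η * μ * N1 / 2 * (P (w s) - Pstar) ≤ 34 / 49 * (η * N1 * g2) := by
      have h1 : η * μ * N1 / 2 * (P (w s) - Pstar)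
          ≤ 34 / 49 * (η * N1) * (2 * μ * (P (w s) - Pstar)) := by
        have hnn : 0 ≤ η * μ * N1 * (P (w s) - Pstar) := by positivity
        nlinarith [hnn]
      calc η * μ * N1 / 2 * (P (w s) - Pstar)
          ≤ 34 / 49 * (η * N1) * (2 * μ * (P (w s) - Pstar)) := h1
        _ ≤ 34 / 49 * (η * N1) * g2 := e4
        _ = 34 / 49 * (η * N1 * g2) := by ring
    have : (1 - η * μ * ((n:ℝ) + 1) / 2) * (P (w s) - Pstar)
        = (P (w s) - Pstar) - η * μ * N1 / 2 * (P (w s) - Pstar) := by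
      rw [hN1def]; ring
    linarith [e3, e5]
  -- final induction
  have hr0 : 0 ≤ 1 - η * μ * ((n:ℝ) + 1) / 2 := by
    have h1 : η * μ * ((n:ℝ) + 1) ≤ η * L * ((n:ℝ) + 1) := by
      apply mul_le_mul_of_nonneg_right _ (by positivity)
      exact mul_le_mul_of_nonneg_left hμL hη0.le
    linarith [hηLN]
  intro S
  induction S with
  | zero => simp
  | succ k ih =>
    calc P (w (k + 1)) - Pstar ≤ (1 - η * μ * ((n:ℝ) + 1) / 2) * (P (w k) - Pstar) := key k
      _ ≤ (1 - η * μ * ((n:ℝ) + 1) / 2) * ((1 - η * μ * ((n:ℝ) + 1) / 2) ^ k * (P (w 0) - Pstar)) :=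
          mul_le_mul_of_nonneg_left ih hr0
      _ = (1 - η * μ * ((n:ℝ) + 1) / 2) ^ (k + 1) * (P (w 0) - Pstar) := by ring
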